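/- arXiv:2501.03302 — 5 statements merged into one kernel-verified Lean document; each statement's English description precedes it below -/
import Mathlib

section
/- Let F be an intersection-closed family of subsets of N = {1,...,n}, and let A ⊆ [i-1] with A ∈ F and A ∪ {i} ∉ F (a 'discarding set at level i'). Then any two sets X, Y ⊆ {i+1,...,n} with A ∪ {i} ∪ X ∈ F and A ∪ {i} ∪ Y ∈ F satisfy X ∩ Y ≠ ∅. -/
open Finset

def interClosed (F : Finset (Finset ℕ)) : Prop := ∀ A ∈ F, ∀ B ∈ F, A ∩ B ∈ F

def Dset (F : Finset (Finset ℕ)) (i : ℕ) : Finset (Finset ℕ) :=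
  (Finset.Icc 1 (i-1)).powerset.filter (fun A => A ∈ F ∧ insert i A ∉ F)

def IsRoot (F : Finset (Finset ℕ)) (n i : ℕ) (A : Finset ℕ) (k : ℕ) : Prop :=
  k ∈ Finset.Icc (i+1) n ∧ ∀ X ⊆ Finset.Icc (i+1) n, insert i A ∪ X ∈ F → k ∈ X

def goodH (F : Finset (Finset ℕ)) (n i : ℕ) (A : Finset ℕ) (HA : Finset (Finset ℕ)) : Prop :=
  ((¬ ∃ X ⊆ Finset.Icc (i+1) n, insert i A ∪ X ∈ F) ∧
    HA = (Finset.Icc (i+1) n).powerset.image (fun X => insert i A ∪ X))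
  ∨ (∃ k, IsRoot F n i A k ∧
    HA = (((Finset.Icc (i+1) n).powerset.filter (fun X => k ∉ X)).image
      (fun X => insert i A ∪ X)))

def Hspec (F : Finset (Finset ℕ)) (n : ℕ) (H : ℕ → Finset ℕ → Finset (Finset ℕ)) : Prop :=
  ∀ i A, A ∈ Dset F i → goodH F n i A (H i A)

theorem stmt0 (n i : ℕ) (F : Finset (Finset ℕ)) (hF : interClosed F)
    (A : Finset ℕ) (hA1 : A ⊆ Finset.Icc 1 (i-1)) (hA2 : A ∈ F)
    (hA3 : insert i A ∉ F)
    (X Y : Finset ℕ) (hX : X ⊆ Finset.Icc (i+1) n) (hY : Y ⊆ Finset.Icc (i+1) n)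
    (hXF : insert i A ∪ X ∈ F) (hYF : insert i A ∪ Y ∈ F) :
    X ∩ Y ≠ ∅ := by
  intro h
  have key : (insert i A ∪ X) ∩ (insert i A ∪ Y) = insert i A := by
    rw [← Finset.union_inter_distrib_left, h, Finset.union_empty]
  exact hA3 (key ▸ hF _ hXF _ hYF)
end

section
/- Let F be intersection-closed over N = {1,...,n}. Let A be a discarding set at level i and B a discarding set at level j, with A ≠ B and 1 ≤ j ≤ i ≤ n. Then the excluded families H_i^A and H_j^B are disjoint, where H_i^A consists of all sets A ∪ {i} ∪ X with X ⊆ {i+1,...,n} (and, if A has a root k > i, additionally requiring k ∉ X), and similarly for H_j^B. -/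
open Finset

theorem stmt3 (n i j : ℕ) (F : Finset (Finset ℕ)) (hF : interClosed F)
    (hj1 : 1 ≤ j) (hji : j ≤ i) (hin : i ≤ n)
    (A B : Finset ℕ) (hA : A ∈ Dset F i) (hB : B ∈ Dset F j) (hAB : A ≠ B)
    (HA HB : Finset (Finset ℕ))
    (hHA : goodH F n i A HA) (hHB : goodH F n j B HB) :
    Disjoint HA HB := by
  simp only [Dset, Finset.mem_filter, Finset.mem_powerset] at hA hB
  obtain ⟨hAsub, hAF, hAi⟩ := hA
  obtain ⟨hBsub, hBF, hBj⟩ := hB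
  rw [Finset.disjoint_left]
  intro S hSA hSB
  have hX : ∃ X ⊆ Finset.Icc (i+1) n, insert i A ∪ X = S := by
    rcases hHA with ⟨_, rfl⟩ | ⟨k, _, rfl⟩
    · simp only [Finset.mem_image, Finset.mem_powerset] at hSA
      obtain ⟨X, h1, h2⟩ := hSA
      exact ⟨X, h1, h2⟩
    · simp only [Finset.mem_image, Finset.mem_filter, Finset.mem_powerset] at hSA
      obtain ⟨X, ⟨h1, _⟩, h2⟩ := hSA
      exact ⟨X, h1, h2⟩
  obtain ⟨X, hXsub, hXS⟩ := hX
  have hXmem : ∀ x ∈ X, i + 1 ≤ x ∧ x ≤ n := by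
    intro x hx; have := hXsub hx; simpa [Finset.mem_Icc] using this
  have hAmem : ∀ x ∈ A, 1 ≤ x ∧ x ≤ i - 1 := by
    intro x hx; have := hAsub hx; simpa [Finset.mem_Icc] using this
  have hBmem : ∀ x ∈ B, 1 ≤ x ∧ x ≤ j - 1 := by
    intro x hx; have := hBsub hx; simpa [Finset.mem_Icc] using this
  -- similarly extract Y
  rcases eq_or_lt_of_le hji with rfl | hlt
  · -- i = j : derive A = B
    have hYex : ∃ Y ⊆ Finset.Icc (j+1) n, insert j B ∪ Y = S := by
      rcases hHB with ⟨_, rfl⟩ | ⟨k, _, rfl⟩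
      · simp only [Finset.mem_image, Finset.mem_powerset] at hSB
        obtain ⟨Y, h1, h2⟩ := hSB
        exact ⟨Y, h1, h2⟩
      · simp only [Finset.mem_image, Finset.mem_filter, Finset.mem_powerset] at hSB
        obtain ⟨Y, ⟨h1, _⟩, h2⟩ := hSB
        exact ⟨Y, h1, h2⟩
    obtain ⟨Y, hYsub, hYS⟩ := hYex
    have hYmem : ∀ x ∈ Y, j + 1 ≤ x ∧ x ≤ n := by
      intro x hx; have := hYsub hx; simpa [Finset.mem_Icc] using this
    apply hAB
    have hSS : insert j A ∪ X = insert j B ∪ Y := by rw [hXS, hYS]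
    ext x
    constructor
    · intro hx
      have hxi := hAmem x hx
      have : x ∈ insert j B ∪ Y := by
        rw [← hSS]; simp [hx]
      simp only [Finset.mem_union, Finset.mem_insert] at this
      rcases this with (rfl | h) | h
      · omega
      · exact h
      · have := hYmem x h; omega
    · intro hx
      have hxi := hBmem x hx
      have : x ∈ insert j A ∪ X := by
        rw [hSS]; simp [hx]
      simp only [Finset.mem_union, Finset.mem_insert] at this
      rcases this with (rfl | h) | h
      · omega
      · exact h
      · have := hXmem x h; omega
  · -- j < i
    have hYex : ∃ Y ⊆ Finset.Icc (j+1) n, insert j B ∪ Y = S := by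
      rcases hHB with ⟨_, rfl⟩ | ⟨k, _, rfl⟩
      · simp only [Finset.mem_image, Finset.mem_powerset] at hSB
        obtain ⟨Y, h1, h2⟩ := hSB
        exact ⟨Y, h1, h2⟩
      · simp only [Finset.mem_image, Finset.mem_filter, Finset.mem_powerset] at hSB
        obtain ⟨Y, ⟨h1, _⟩, h2⟩ := hSB
        exact ⟨Y, h1, h2⟩
    obtain ⟨Y, hYsub, hYS⟩ := hYex
    have hYmem : ∀ x ∈ Y, j + 1 ≤ x ∧ x ≤ n := by
      intro x hx; have := hYsub hx; simpa [Finset.mem_Icc] using this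
    have hSS : insert i A ∪ X = insert j B ∪ Y := by rw [hXS, hYS]
    -- key : insert j B ∪ (A \ Icc 1 j) = A
    have hX'sub : A \ Finset.Icc 1 j ⊆ Finset.Icc (j+1) n := by
      intro x hx
      simp only [Finset.mem_sdiff, Finset.mem_Icc, not_and, not_le] at hx
      have := hAmem x hx.1
      simp only [Finset.mem_Icc]
      omega
    have key : insert j B ∪ (A \ Finset.Icc 1 j) = A := by
      apply Finset.Subset.antisymm
      · intro x hx
        simp only [Finset.mem_union, Finset.mem_insert, Finset.mem_sdiff] at hx
        rcases hx with (rfl | hx) | ⟨hx, _⟩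
        · -- x = j : j ∈ S, so j ∈ insert i A ∪ X, j < i, j ∉ X ⇒ j ∈ A
          have hjS : x ∈ insert i A ∪ X := by
            rw [hSS]; simp
          simp only [Finset.mem_union, Finset.mem_insert] at hjS
          rcases hjS with (h | h) | h
          · omega
          · exact h
          · have := hXmem x h; omega
        · -- x ∈ B
          have hxb := hBmem x hx
          have hxS : x ∈ insert i A ∪ X := by
            rw [hSS]; simp [hx]
          simp only [Finset.mem_union, Finset.mem_insert] at hxS
          rcases hxS with (rfl | h) | h
          · omega
          · exact h
          · have := hXmem x h; omega
        · exact hx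
      · intro x hx
        by_cases hxj : x ≤ j
        · have hxS : x ∈ insert j B ∪ Y := by
            rw [← hSS]; simp [hx]
          simp only [Finset.mem_union, Finset.mem_insert] at hxS
          simp only [Finset.mem_union, Finset.mem_insert, Finset.mem_sdiff]
          rcases hxS with (rfl | h) | h
          · exact Or.inl (Or.inl rfl)
          · exact Or.inl (Or.inr h)
          · have := hYmem x h; omega
        · simp only [Finset.mem_union, Finset.mem_sdiff, Finset.mem_Icc]
          right
          exact ⟨hx, by omega⟩
    rcases hHB with ⟨hno, rfl⟩ | ⟨k, ⟨hkIcc, hkroot⟩, rfl⟩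
    · exact hno ⟨A \ Finset.Icc 1 j, hX'sub, by rw [key]; exact hAF⟩
    · have hkX' : k ∈ A \ Finset.Icc 1 j := by
        apply hkroot _ hX'sub
        rw [key]; exact hAF
      simp only [Finset.mem_sdiff] at hkX'
      have hkA : k ∈ A := hkX'.1
      have hkS : k ∈ insert j B ∪ Y := by
        rw [← hSS]; simp [hkA]
      simp only [Finset.mem_image, Finset.mem_filter, Finset.mem_powerset] at hSB
      obtain ⟨Y', ⟨hY'sub, hkY'⟩, hY'S⟩ := hSB
      have hkS' : k ∈ insert j B ∪ Y' := by
        rw [hY'S, ← hXS]; simp [hkA]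
      simp only [Finset.mem_union, Finset.mem_insert, Finset.mem_Icc] at hkS' hkIcc
      rcases hkS' with (rfl | h) | h
      · omega
      · have := hBmem k h; omega
      · exact hkY' h
end

section
/- Let F be intersection-closed over N = {1,...,n} and A discarding at level i. Then no set in H_i^A belongs to F_i = {S ∈ F : i ∈ S}, i.e., every set of the form A ∪ {i} ∪ X with X ⊆ {i+1,...,n} (with k ∉ X when A has root k) is not a member of F. -/
open Finset

theorem stmt5 (n i : ℕ) (F : Finset (Finset ℕ)) (hF : interClosed F)
    (A : Finset ℕ) (hA : A ∈ Dset F i) :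
    ((¬ ∃ k, IsRoot F n i A k) →
      ∀ X ⊆ Finset.Icc (i+1) n, insert i A ∪ X ∉ F) ∧
    (∀ k, IsRoot F n i A k →
      ∀ X ⊆ Finset.Icc (i+1) n, k ∉ X → insert i A ∪ X ∉ F) := by
  simp only [Dset, Finset.mem_filter, Finset.mem_powerset] at hA
  obtain ⟨hAsub, hAF, hiA⟩ := hA
  constructor
  · intro hnr
    have key : ∀ m, ∀ X ⊆ Finset.Icc (i+1) n, X.card = m → insert i A ∪ X ∉ F := by
      intro m
      induction m using Nat.strong_induction_on with
      | _ m ih =>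
        intro X hX hcard hXF
        rcases X.eq_empty_or_nonempty with rfl | ⟨k, hk⟩
        · rw [Finset.union_empty] at hXF
          exact hiA hXF
        · have hkIcc := hX hk
          have hnotroot : ¬ IsRoot F n i A k := fun h => hnr ⟨k, h⟩
          rw [IsRoot] at hnotroot
          push_neg at hnotroot
          obtain ⟨Y, hY, hYF, hkY⟩ := hnotroot hkIcc
          have hinter : insert i A ∪ (X ∩ Y) ∈ F := by
            have := hF _ hXF _ hYF
            rwa [← Finset.union_inter_distrib_left] at this
          have hlt : (X ∩ Y).card < m := by
            subst hcard
            exact Finset.card_lt_card ⟨Finset.inter_subset_left,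
              fun h => hkY (Finset.mem_inter.mp (h hk)).2⟩
          exact ih _ hlt (X ∩ Y) (fun x hx => hX (Finset.mem_inter.mp hx).1) rfl hinter
    exact fun X hX => key X.card X hX rfl
  · intro k hk X hX hkX hXF
    exact hkX (hk.2 X hX hXF)
end

section
/- Let F ⊆ 2^N be intersection-closed with ∅ ∈ F. Then |F_1| ≤ 2^{n-1} − Σ_{A ∈ D_1} |H_1^A|, where D_1 is the set of discarding sets at level 1 and H_1^A the family of sets excluded by A. -/
open Finset

theorem stmt6 (n : ℕ) (hn : 1 ≤ n) (F : Finset (Finset ℕ))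
    (hFsub : F ⊆ (Finset.Icc 1 n).powerset)
    (hF : interClosed F) (hempty : ∅ ∈ F)
    (H : ℕ → Finset ℕ → Finset (Finset ℕ)) (hH : Hspec F n H) :
    ((F.filter (fun S => 1 ∈ S)).card : ℤ) ≤
      (2 : ℤ) ^ (n - 1) - ∑ A ∈ Dset F 1, ((H 1 A).card : ℤ) := by
  classical
  set F1 := F.filter (fun S => 1 ∈ S) with hF1
  set P := (Finset.Icc 2 n).powerset.image (fun X => insert 1 X) with hPdef
  have hone : (1:ℕ) ∉ Finset.Icc 2 n := by simp
  have hPcard : P.card = 2 ^ (n-1) := by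
    rw [hPdef, Finset.card_image_of_injOn, Finset.card_powerset, Nat.card_Icc]
    · congr 1
    · intro X hX Y hY h
      have hx1 : 1 ∉ X := fun h1 => hone ((Finset.mem_powerset.mp hX) h1)
      have hy1 : 1 ∉ Y := fun h1 => hone ((Finset.mem_powerset.mp hY) h1)
      have := congrArg (fun s => Finset.erase s 1) h
      simpa [Finset.erase_insert, hx1, hy1] using this
  have hF1P : F1 ⊆ P := by
    intro S hS
    simp only [hF1, Finset.mem_filter] at hS
    refine Finset.mem_image.mpr ⟨S.erase 1, ?_, Finset.insert_erase hS.2⟩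
    rw [Finset.mem_powerset]
    intro x hx
    obtain ⟨hx1, hxS⟩ := Finset.mem_erase.mp hx
    have := Finset.mem_powerset.mp (hFsub hS.1) hxS
    rw [Finset.mem_Icc] at this ⊢
    omega
  have hIcc0 : Finset.Icc 1 (1-1) = (∅ : Finset ℕ) := by
    apply Finset.Icc_eq_empty; omega
  by_cases h1 : ({1} : Finset ℕ) ∈ F
  · -- Dset F 1 = ∅
    have hD : Dset F 1 = ∅ := by
      ext A
      simp only [Dset, hIcc0, Finset.mem_filter, Finset.mem_powerset,
        Finset.subset_empty, Finset.notMem_empty, iff_false]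
      rintro ⟨rfl, _, hA3⟩
      exact hA3 (by simpa using h1)
    rw [hD]
    simp only [Finset.sum_empty, sub_zero]
    have := Finset.card_le_card hF1P
    rw [hPcard] at this
    exact_mod_cast this
  · -- Dset F 1 = {∅}
    have hD : Dset F 1 = {∅} := by
      ext A
      simp only [Dset, hIcc0, Finset.mem_filter, Finset.mem_powerset,
        Finset.subset_empty, Finset.mem_singleton]
      constructor
      · rintro ⟨rfl, _⟩; rfl
      · rintro rfl
        exact ⟨rfl, hempty, by simpa using h1⟩
    have hmem : (∅ : Finset ℕ) ∈ Dset F 1 := by rw [hD]; simp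
    have hg := hH 1 ∅ hmem
    set H0 := H 1 ∅ with hH0
    have hIcc2 : Finset.Icc (1+1) n = Finset.Icc 2 n := rfl
    have hins : ∀ X : Finset ℕ, insert 1 (∅ : Finset ℕ) ∪ X = insert 1 X := by
      intro X; ext a; simp
    have key : H0 ⊆ P ∧ Disjoint F1 H0 := by
      rcases hg with ⟨hno, heq⟩ | ⟨k, ⟨hk, hroot⟩, heq⟩
      · constructor
        · rw [heq, hIcc2, hPdef]
          apply Finset.image_subset_iff.mpr
          intro X hX
          rw [hins X]
          exact Finset.mem_image_of_mem _ hX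
        · have hF1e : F1 = ∅ := by
            rw [Finset.eq_empty_iff_forall_notMem]
            intro S hS
            simp only [hF1, Finset.mem_filter] at hS
            apply hno
            refine ⟨S.erase 1, ?_, ?_⟩
            · intro x hx
              obtain ⟨hx1, hxS⟩ := Finset.mem_erase.mp hx
              have := Finset.mem_powerset.mp (hFsub hS.1) hxS
              rw [Finset.mem_Icc] at this ⊢
              omega
            · rw [hins, Finset.insert_erase hS.2]; exact hS.1
          rw [hF1e]; exact Finset.disjoint_empty_left _
      · constructor
        · rw [heq, hIcc2, hPdef]
          apply Finset.image_subset_iff.mpr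
          intro X hX
          rw [hins X]
          exact Finset.mem_image_of_mem _ (Finset.mem_of_mem_filter X hX)
        · rw [Finset.disjoint_left]
          intro S hS hSH
          rw [heq] at hSH
          obtain ⟨X, hX, hXS⟩ := Finset.mem_image.mp hSH
          obtain ⟨hXsub, hkX⟩ := Finset.mem_filter.mp hX
          rw [Finset.mem_powerset] at hXsub
          simp only [hF1, Finset.mem_filter] at hS
          exact hkX (hroot X hXsub (hXS ▸ hS.1))
    obtain ⟨hHP, hdisj⟩ := key
    have hcard : F1.card + H0.card ≤ P.card := by
      rw [← Finset.card_union_of_disjoint hdisj]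
      exact Finset.card_le_card (Finset.union_subset hF1P hHP)
    rw [hD, Finset.sum_singleton, ← hH0]
    have h2 : ((2:ℤ))^(n-1) = ((2^(n-1) : ℕ) : ℤ) := by push_cast; ring
    rw [h2, ← hPcard]
    omega
end

section
/- Let F ⊆ 2^N be intersection-closed with F ≠ F_1 and |F_1| ≥ ... ≥ |F_n|, and t^i as above. Then for every 1 ≤ i ≤ n, 2^{n-i} · |F \ (F_i ∪ ... ∪ F_n)| ≥ t^{i-1}. -/
open Finset

-- recover X from insert i A ∪ X
lemma recover (n i : ℕ) (A : Finset ℕ) (hA : A ⊆ Finset.Icc 1 (i-1))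
    {X : Finset ℕ} (hX : X ⊆ Finset.Icc (i+1) n) :
    (insert i A ∪ X) ∩ Finset.Icc (i+1) n = X := by
  ext a
  simp only [mem_inter, mem_union, mem_insert, mem_Icc]
  constructor
  · rintro ⟨((rfl | ha) | ha), h1, h2⟩
    · omega
    · have := hA ha; rw [mem_Icc] at this; omega
    · exact ha
  · intro ha
    have := hX ha; rw [mem_Icc] at this
    exact ⟨Or.inr ha, this⟩

lemma H_card_ge (F : Finset (Finset ℕ)) (n i : ℕ) (A : Finset ℕ)
    (hA : A ⊆ Finset.Icc 1 (i-1)) (HA : Finset (Finset ℕ)) (hg : goodH F n i A HA) :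
    2 ^ (n - (i+1)) ≤ HA.card := by
  have hinj : ∀ X ⊆ Finset.Icc (i+1) n, ∀ Y ⊆ Finset.Icc (i+1) n,
      insert i A ∪ X = insert i A ∪ Y → X = Y := by
    intro X hX Y hY h
    rw [← recover n i A hA hX, ← recover n i A hA hY, h]
  obtain ⟨-, rfl⟩ | ⟨k, ⟨hk, -⟩, rfl⟩ := hg
  · have hc := Finset.card_image_of_injOn (s := (Finset.Icc (i+1) n).powerset)
      (f := fun X => insert i A ∪ X) (by
        intro X hX Y hY h
        simp only [mem_coe, mem_powerset] at hX hY
        exact hinj X hX Y hY h)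
    rw [hc, card_powerset, Nat.card_Icc]
    exact Nat.pow_le_pow_right (by norm_num) (by omega)
  · rw [mem_Icc] at hk
    have heq : (Finset.Icc (i+1) n).powerset.filter (fun X => k ∉ X)
        = ((Finset.Icc (i+1) n).erase k).powerset := by
      ext X
      simp only [mem_filter, mem_powerset, subset_erase]
    have hc := Finset.card_image_of_injOn
      (s := (Finset.Icc (i+1) n).powerset.filter (fun X => k ∉ X))
      (f := fun X => insert i A ∪ X) (by
        intro X hX Y hY h
        simp only [mem_coe, mem_filter, mem_powerset] at hX hY
        exact hinj X hX.1 Y hY.1 h)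
    rw [hc, heq, card_powerset, card_erase_of_mem (by rw [mem_Icc]; omega), Nat.card_Icc]
    exact Nat.pow_le_pow_right (by norm_num) (by omega)

lemma empty_mem (n : ℕ) (F : Finset (Finset ℕ))
    (hFsub : F ⊆ (Finset.Icc 1 n).powerset) (hF : interClosed F)
    (hmono : ∀ i ∈ Finset.Icc 1 n, ∀ j ∈ Finset.Icc 1 n, i ≤ j →
      (F.filter (fun S => j ∈ S)).card ≤ (F.filter (fun S => i ∈ S)).card)
    (hne : F.filter (fun S => 1 ∈ S) ≠ F) : ∅ ∈ F := by
  have hFne : F.Nonempty := by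
    rcases F.eq_empty_or_nonempty with rfl | h
    · simp at hne
    · exact h
  obtain ⟨M, hM, hMmin⟩ := F.exists_min_image Finset.card hFne
  have hMsub : ∀ S ∈ F, M ⊆ S := by
    intro S hS
    have h1 : S ∩ M ∈ F := hF S hS M hM
    have h2 : S ∩ M ⊆ M := inter_subset_right
    have h3 : M.card ≤ (S ∩ M).card := hMmin _ h1
    have := Finset.eq_of_subset_of_card_le h2 h3
    rw [← this]
    exact inter_subset_left
  by_contra hemp
  have hMne : M.Nonempty := by
    rcases M.eq_empty_or_nonempty with rfl | h
    · exact absurd hM hemp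
    · exact h
  obtain ⟨m, hm⟩ := hMne
  have hmIcc : m ∈ Finset.Icc 1 n := (mem_powerset.mp (hFsub hM)) hm
  have h1Icc : (1:ℕ) ∈ Finset.Icc 1 n := by
    rw [mem_Icc] at hmIcc ⊢; omega
  have hfm : F.filter (fun S => m ∈ S) = F := by
    apply Finset.filter_true_of_mem
    intro S hS
    exact hMsub S hS hm
  have := hmono 1 h1Icc m hmIcc (by rw [mem_Icc] at hmIcc; omega)
  rw [hfm] at this
  exact hne (Finset.eq_of_subset_of_card_le (filter_subset _ _) this)

def Gdef (n i : ℕ) (F : Finset (Finset ℕ)) : Finset (Finset ℕ) :=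
  F.filter (fun S => ∀ j ∈ Finset.Icc i n, j ∉ S)

lemma step_count (n i : ℕ) (hi : 1 ≤ i) (hin : i ≤ n) (F : Finset (Finset ℕ))
    (hFsub : F ⊆ (Finset.Icc 1 n).powerset) :
    2 * (Gdef n i F).card ≤ (Gdef n (i+1) F).card + (Dset F i).card := by
  set G := Gdef n i F with hG
  set G' := G.filter (fun A => insert i A ∈ F) with hG'
  have hGmem : ∀ S, S ∈ G ↔ S ∈ F ∧ ∀ j ∈ Finset.Icc i n, j ∉ S := by
    intro S; rw [hG, Gdef, mem_filter]
  have hG2mem : ∀ S, S ∈ Gdef n (i+1) F ↔ S ∈ F ∧ ∀ j ∈ Finset.Icc (i+1) n, j ∉ S := by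
    intro S; rw [Gdef, mem_filter]
  have hD : Dset F i = G.filter (fun A => insert i A ∉ F) := by
    ext A
    simp only [Dset, mem_filter, mem_powerset, hGmem]
    constructor
    · rintro ⟨hsub, hAF, hins⟩
      refine ⟨⟨hAF, ?_⟩, hins⟩
      intro j hj hjA
      have := hsub hjA; rw [mem_Icc] at this hj; omega
    · rintro ⟨⟨hAF, havoid⟩, hins⟩
      refine ⟨?_, hAF, hins⟩
      intro a ha
      have h1 := mem_powerset.mp (hFsub hAF) ha
      rw [mem_Icc] at h1 ⊢
      rcases Nat.lt_or_ge a i with h | h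
      · omega
      · exact absurd ha (havoid a (by rw [mem_Icc]; omega))
  have hsplit : G'.card + (Dset F i).card = G.card := by
    rw [hD, hG']
    exact Finset.card_filter_add_card_filter_not (fun A => insert i A ∈ F)
  have hiG : ∀ S ∈ G, i ∉ S := by
    intro S hS
    exact ((hGmem S).mp hS).2 i (by rw [mem_Icc]; omega)
  have himg : (G'.image (insert i)) ⊆ Gdef n (i+1) F := by
    intro B hB
    simp only [mem_image] at hB
    obtain ⟨A, hA, rfl⟩ := hB
    rw [hG', mem_filter] at hA
    obtain ⟨hAG, hins⟩ := hA
    have hAG2 := (hGmem A).mp hAG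
    rw [hG2mem]
    refine ⟨hins, ?_⟩
    intro j hj
    rw [mem_Icc] at hj
    simp only [mem_insert]
    rintro (rfl | hjA)
    · omega
    · exact hAG2.2 j (by rw [mem_Icc]; omega) hjA
  have hGsub : G ⊆ Gdef n (i+1) F := by
    intro S hS
    have hS2 := (hGmem S).mp hS
    rw [hG2mem]
    exact ⟨hS2.1, fun j hj => hS2.2 j (by rw [mem_Icc] at hj ⊢; omega)⟩
  have hdisj : Disjoint G (G'.image (insert i)) := by
    rw [Finset.disjoint_left]
    intro S hS hS'
    simp only [mem_image] at hS'
    obtain ⟨A, hA, rfl⟩ := hS'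
    exact hiG _ hS (mem_insert_self i A)
  have hinj : (G'.image (insert i)).card = G'.card := by
    apply Finset.card_image_of_injOn
    intro X hX Y hY h
    simp only [mem_coe, hG', mem_filter] at hX hY
    have hXi : i ∉ X := hiG X hX.1
    have hYi : i ∉ Y := hiG Y hY.1
    rw [← Finset.erase_insert hXi, ← Finset.erase_insert hYi, h]
  have hle := Finset.card_le_card (Finset.union_subset hGsub himg)
  rw [Finset.card_union_of_disjoint hdisj, hinj] at hle
  omega

theorem stmt8 (n : ℕ) (hn : 1 ≤ n) (F : Finset (Finset ℕ))
    (hFsub : F ⊆ (Finset.Icc 1 n).powerset) (hF : interClosed F)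
    (hmono : ∀ i ∈ Finset.Icc 1 n, ∀ j ∈ Finset.Icc 1 n, i ≤ j →
      (F.filter (fun S => j ∈ S)).card ≤ (F.filter (fun S => i ∈ S)).card)
    (hne : F.filter (fun S => 1 ∈ S) ≠ F)
    (H : ℕ → Finset ℕ → Finset (Finset ℕ)) (hH : Hspec F n H)
    (t : ℕ → ℤ) (ht0 : t 0 = 2 ^ (n - 1))
    (ht : ∀ i ∈ Finset.Icc 1 n, t i = t (i-1) - ∑ A ∈ Dset F i, ((H i A).card : ℤ)) :
    ∀ i ∈ Finset.Icc 1 n,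
      (2 : ℤ) ^ (n - i) * ((F.filter (fun S => ∀ j ∈ Finset.Icc i n, j ∉ S)).card : ℤ)
        ≥ t (i - 1) := by
  have hempty : ∅ ∈ F := empty_mem n F hFsub hF hmono hne
  have key : ∀ i, 1 ≤ i → i ≤ n →
      (2 : ℤ) ^ (n - i) * ((Gdef n i F).card : ℤ) ≥ t (i - 1) := by
    intro i h1
    induction i, h1 using Nat.le_induction with
    | base =>
      intro _
      have ht1 : t (1 - 1) = 2 ^ (n - 1) := ht0
      rw [ht1]
      have hmem : ∅ ∈ Gdef n 1 F := by
        rw [Gdef, mem_filter]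
        exact ⟨hempty, fun j _ => Finset.notMem_empty j⟩
      have hcard : 1 ≤ (Gdef n 1 F).card := Finset.card_pos.mpr ⟨∅, hmem⟩
      have hcard' : (1:ℤ) ≤ ((Gdef n 1 F).card : ℤ) := by exact_mod_cast hcard
      have hp : (0:ℤ) < 2 ^ (n - 1) := by positivity
      nlinarith
    | succ i hi ih =>
      intro h2
      have hin : i ≤ n := by omega
      have IH := ih hin
      have hti := ht i (by rw [mem_Icc]; omega)
      set m := n - (i+1) with hm
      have hnm : n - i = m + 1 := by omega
      have hsum : ((Dset F i).card : ℤ) * 2 ^ m ≤ ∑ A ∈ Dset F i, ((H i A).card : ℤ) := by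
        calc ((Dset F i).card : ℤ) * 2 ^ m = ∑ _A ∈ Dset F i, (2:ℤ) ^ m := by
              rw [Finset.sum_const, nsmul_eq_mul]
          _ ≤ ∑ A ∈ Dset F i, ((H i A).card : ℤ) := by
              apply Finset.sum_le_sum
              intro A hA
              have hAsub : A ⊆ Finset.Icc 1 (i-1) := by
                have hA2 := hA
                rw [Dset, mem_filter, mem_powerset] at hA2
                exact hA2.1
              have hc := H_card_ge F n i A hAsub (H i A) (hH i A hA)
              rw [← hm] at hc
              exact_mod_cast hc
      have hstep := step_count n i hi hin F hFsub
      have hstep' : 2 * ((Gdef n i F).card : ℤ) ≤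
          ((Gdef n (i+1) F).card : ℤ) + ((Dset F i).card : ℤ) := by exact_mod_cast hstep
      rw [hnm] at IH
      have hp : (0:ℤ) < 2 ^ m := by positivity
      have hsimp : (i + 1 - 1 : ℕ) = i := by omega
      rw [hsimp, hti]
      rw [pow_succ] at IH
      set c1 : ℤ := ((Gdef n i F).card : ℤ)
      set c2 : ℤ := ((Gdef n (i+1) F).card : ℤ)
      set d : ℤ := ((Dset F i).card : ℤ)
      nlinarith [mul_nonneg (le_of_lt hp) (show (0:ℤ) ≤ c2 + d - 2*c1 by linarith)]
  intro i hi
  rw [mem_Icc] at hi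
  exact key i hi.1 hi.2
end
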